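/- B_k(m) is a polynomial in m of degree K with leading coefficient |SP_k|/K!, where |SP_k| = Π_{i=1}^{n-1}(k_1+...+k_i+1) is the number of Stirling permutations of type k and K = k_1+...+k_n; moreover B_k(0) = B_k(-1) = ... = B_k(-K+n) = 0. -/

import Mathlib

open Finset

/-- The multiset {1^{k 0}, 2^{k 1}, ..., n^{k (n-1)}}. -/
def multisetOf (k : ℕ → ℕ) (n : ℕ) : Multiset ℕ :=
  ∑ i ∈ Finset.range n, Multiset.replicate (k i) (i + 1)

/-- A word is a Stirling permutation: between two equal letters, all letters are ≥. -/
def IsStirlingPerm (w : List ℕ) : Prop :=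
  ∀ i s j : ℕ, i < s → s < j → j < w.length →
    w.getD i 0 = w.getD j 0 → w.getD i 0 ≤ w.getD s 0

/-- Number of descents of a word: indices i (0-based, i < K-1) with w i > w (i+1),
together with the last index. -/
def descents (w : List ℕ) : ℕ :=
  ((Finset.range (w.length - 1)).filter fun i => w.getD (i + 1) 0 < w.getD i 0).card + 1

/-- Eulerian numbers A_{k,i}: number of Stirling permutations of {1^{k_1},...,n^{k_n}}
with exactly i descents. -/
noncomputable def eulerianA (k : ℕ → ℕ) (n i : ℕ) : ℕ :=
  Nat.card {w : List ℕ //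
    (↑w : Multiset ℕ) = multisetOf k n ∧ IsStirlingPerm w ∧ descents w = i}

/-- K = k_1 + ... + k_n. -/
def bigK (k : ℕ → ℕ) (n : ℕ) : ℕ := ∑ i ∈ Finset.range n, k i

/-- B_k(m): the coefficient of x^m in (∑_{i=1}^n A_{k,i} x^i)/(1-x)^{K+1}. -/
noncomputable def Bpoly (k : ℕ → ℕ) (n m : ℕ) : ℕ :=
  ∑ i ∈ Finset.Icc 1 n, eulerianA k n i * Nat.choose (bigK k n + m - i) (bigK k n)

/-- b_k(m): the coefficient of x^m in (∑_{i=K-n+1}^{K} A_{k,K+1-i} x^i)/(1-x)^{K+1}. -/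
noncomputable def bpoly (k : ℕ → ℕ) (n m : ℕ) : ℕ :=
  ∑ i ∈ Finset.Icc (bigK k n - n + 1) (bigK k n),
    eulerianA k n (bigK k n + 1 - i) * Nat.choose (bigK k n + m - i) (bigK k n)

/-- The polynomial extension of B_k to integer arguments, over ℚ:
B_k(m) = ∑_{i=1}^n A_{k,i} · C(K+m-i, K), where C(x, K) = x(x-1)⋯(x-K+1)/K!. -/
noncomputable def BpolyQ (k : ℕ → ℕ) (n : ℕ) (m : ℤ) : ℚ :=
  ∑ i ∈ Finset.Icc 1 n,
    (eulerianA k n i : ℚ) *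
      ((∏ j ∈ Finset.range (bigK k n), ((m : ℚ) - i + 1 + j)) / (Nat.factorial (bigK k n)))

namespace SPaux

lemma gdl {l l' : List ℕ} {n : ℕ} (h : n < l.length) : (l ++ l').getD n 0 = l.getD n 0 := by
  simp [List.getD_eq_getElem?_getD, List.getElem?_append_left h]

lemma gdr {l l' : List ℕ} {n : ℕ} (h : l.length ≤ n) :
    (l ++ l').getD n 0 = l'.getD (n - l.length) 0 := by
  simp [List.getD_eq_getElem?_getD, List.getElem?_append_right h]

lemma gdrep {c cnt n : ℕ} (h : n < cnt) : (List.replicate cnt c).getD n 0 = c := by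
  simp [List.getD_eq_getElem?_getD, List.getElem?_replicate_of_lt h]

lemma gd_out_left {a b : List ℕ} {c cnt t : ℕ} (h : t < a.length) :
    (a ++ List.replicate cnt c ++ b).getD t 0 = (a ++ b).getD t 0 := by
  rw [gdl (by simp; omega), gdl h, gdl h]

lemma gd_mid {a b : List ℕ} {c cnt t : ℕ} (h1 : a.length ≤ t) (h2 : t < a.length + cnt) :
    (a ++ List.replicate cnt c ++ b).getD t 0 = c := by
  rw [gdl (by simp; omega), gdr h1, gdrep (by omega)]

lemma gd_out_right {a b : List ℕ} {c cnt t : ℕ} (h : a.length + cnt ≤ t) :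
    (a ++ List.replicate cnt c ++ b).getD t 0 = (a ++ b).getD (t - cnt) 0 := by
  rcases Nat.lt_or_ge (t - cnt) (a.length + b.length) with hlt | hge
  · rw [gdr (l := a ++ List.replicate cnt c) (by simp; omega), gdr (l := a) (by omega)]
    simp only [List.length_append, List.length_replicate]
    congr 1
    omega
  · rw [List.getD_eq_default, List.getD_eq_default] <;> simp <;> omega

lemma mem_of_getD {l : List ℕ} {t : ℕ} (h : t < l.length) : l.getD t 0 ∈ l := by
  rw [List.getD_eq_getElem _ _ h]
  exact List.getElem_mem h

lemma isSP_remove {a b : List ℕ} {c cnt : ℕ}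
    (h : IsStirlingPerm (a ++ List.replicate cnt c ++ b)) : IsStirlingPerm (a ++ b) := by
  intro i s j his hsj hj heq
  set L := a.length with hL
  have key : ∀ t, (a ++ b).getD t 0 =
      (a ++ List.replicate cnt c ++ b).getD (if t < L then t else t + cnt) 0 := by
    intro t
    split_ifs with ht
    · rw [gd_out_left ht]
    · rw [gd_out_right (by omega)]
      congr 1
      omega
  have hlen : (a ++ List.replicate cnt c ++ b).length = L + cnt + b.length := by simp; omega
  have hjl : j < L + b.length := by simpa using hj
  rw [key i, key s, key j] at *
  refine h (if i < L then i else i + cnt) (if s < L then s else s + cnt)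
    (if j < L then j else j + cnt) ?_ ?_ ?_ heq
  · split_ifs <;> omega
  · split_ifs <;> omega
  · rw [hlen]; split_ifs <;> omega

lemma isSP_insert {a b : List ℕ} {c cnt : ℕ}
    (hu : IsStirlingPerm (a ++ b)) (hlt : ∀ x ∈ a ++ b, x < c) :
    IsStirlingPerm (a ++ List.replicate cnt c ++ b) := by
  intro i s j his hsj hj heq
  set L := a.length with hL
  have hlen : (a ++ List.replicate cnt c ++ b).length = L + cnt + b.length := by simp; omega
  rw [hlen] at hj
  have hval : ∀ t, t < L + cnt + b.length →
      (L ≤ t ∧ t < L + cnt ∧ (a ++ List.replicate cnt c ++ b).getD t 0 = c) ∨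
      ((t < L ∨ L + cnt ≤ t) ∧
        (a ++ List.replicate cnt c ++ b).getD t 0 =
          (a ++ b).getD (if t < L then t else t - cnt) 0 ∧
        (a ++ List.replicate cnt c ++ b).getD t 0 < c) := by
    intro t ht
    rcases Nat.lt_or_ge t L with h1 | h1
    · refine Or.inr ⟨Or.inl h1, by rw [gd_out_left h1, if_pos h1], ?_⟩
      rw [gd_out_left h1]
      exact hlt _ (mem_of_getD (by simp; omega))
    · rcases Nat.lt_or_ge t (L + cnt) with h2 | h2
      · exact Or.inl ⟨h1, h2, gd_mid h1 h2⟩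
      · refine Or.inr ⟨Or.inr h2, by rw [gd_out_right h2, if_neg (by omega)], ?_⟩
        rw [gd_out_right h2]
        exact hlt _ (mem_of_getD (by simp; omega))
  rcases hval s (by omega) with ⟨hs1, hs2, hs3⟩ | ⟨hs0, hs1, hs2⟩
  · -- s in block: value c is max
    rw [hs3]
    rcases hval i (by omega) with ⟨_, _, hi3⟩ | ⟨_, _, hi3⟩
    · rw [hi3]
    · exact le_of_lt hi3
  · -- s outside block
    rcases hval i (by omega) with ⟨hi1, hi2, hi3⟩ | ⟨hi0, hi1, hi2⟩
    · -- i in block, then j must be outside (j > s ≥ L + cnt), contradiction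
      have hsge : L + cnt ≤ s := by rcases hs0 with h | h <;> omega
      rcases hval j (by omega) with ⟨hj1, hj2, _⟩ | ⟨_, hj1, hj2⟩
      · omega
      · rw [hi3] at heq; omega
    · rcases hval j (by omega) with ⟨hj1, hj2, hj3⟩ | ⟨hj0, hj1, hj2⟩
      · rw [hj3] at heq; omega
      · rw [hi1, hj1] at heq
        rw [hi1, hs1]
        apply hu _ _ _ ?_ ?_ ?_ heq
        · split_ifs <;> omega
        · split_ifs <;> omega
        · simp only [List.length_append]; split_ifs <;> omega

lemma first_decomp {c : ℕ} {w : List ℕ} (h : c ∈ w) : ∃ a r, w = a ++ c :: r ∧ c ∉ a := by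
  induction w with
  | nil => cases h
  | cons x t ih =>
    by_cases hx : x = c
    · exact ⟨[], t, by simp [hx], by simp⟩
    · obtain ⟨a, r, h1, h2⟩ := ih (List.mem_of_ne_of_mem (fun hc => hx hc.symm) h)
      exact ⟨x :: a, r, by simp [h1], by
        simp only [List.mem_cons, not_or]
        exact ⟨fun hc => hx hc.symm, h2⟩⟩

lemma block_decomp {w : List ℕ} {c : ℕ} (hw : IsStirlingPerm w) (hmem : c ∈ w)
    (hmax : ∀ x ∈ w, x ≤ c) :
    ∃ a b, w = a ++ List.replicate (w.count c) c ++ b ∧ c ∉ a ∧ c ∉ b := by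
  obtain ⟨a, r, hw1, ha⟩ := first_decomp hmem
  obtain ⟨b', s', hw2, hb'⟩ := first_decomp (w := w.reverse) (by simpa using hmem)
  have hw2' : w = s'.reverse ++ c :: b'.reverse := by
    have := congrArg List.reverse hw2
    simpa using this
  set i := a.length with hi
  set j := s'.length with hj
  have hb : c ∉ b'.reverse := by simpa using hb'
  have hlenw : w.length = j + 1 + b'.reverse.length := by rw [hw2']; simp [hj]; omega
  have hgi : w.getD i 0 = c := by
    rw [hw1, gdr (le_refl _)]
    simp
  have hgj : w.getD j 0 = c := by
    rw [hw2', gdr (by simp [hj])]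
    simp [hj]
  have hltc : ∀ t < i, w.getD t 0 ≠ c := by
    intro t ht hc
    rw [hw1, gdl ht] at hc
    exact ha (hc ▸ mem_of_getD ht)
  have hgtc : ∀ t, j < t → t < w.length → w.getD t 0 ≠ c := by
    intro t ht1 ht2 hc
    have h1 : (s'.reverse ++ [c]).length ≤ t := by simp; omega
    have : w.getD t 0 = b'.reverse.getD (t - (j + 1)) 0 := by
      rw [hw2']
      rw [show s'.reverse ++ c :: b'.reverse = (s'.reverse ++ [c]) ++ b'.reverse by simp]
      rw [gdr h1]
      congr 1
      simp [hj]
    rw [this] at hc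
    exact hb (hc ▸ mem_of_getD (by simp at hlenw ⊢; omega))
  have hij : i ≤ j := by
    by_contra hcon
    exact hltc j (by omega) hgj
  have hjlen : j < w.length := by omega
  have hmidall : ∀ t, i ≤ t → t ≤ j → w.getD t 0 = c := by
    intro t h1 h2
    rcases eq_or_lt_of_le h1 with h1' | h1'
    · rw [← h1']; exact hgi
    rcases eq_or_lt_of_le h2 with h2' | h2'
    · rw [h2']; exact hgj
    have hle := hw i t j h1' h2' hjlen (hgi.trans hgj.symm)
    rw [hgi] at hle
    exact le_antisymm (hmax _ (mem_of_getD (by omega))) hle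
  -- decomposition
  have hdec : w = w.take i ++ (w.drop i).take (j + 1 - i) ++ w.drop (j + 1) := by
    rw [List.append_assoc]
    nth_rewrite 1 [← List.take_append_drop i w]
    congr 1
    nth_rewrite 1 [← List.take_append_drop (j + 1 - i) (w.drop i)]
    congr 1
    rw [List.drop_drop]
    congr 1
    omega
  have hmidlen : ((w.drop i).take (j + 1 - i)).length = j + 1 - i := by
    simp
    omega
  have hmid : (w.drop i).take (j + 1 - i) = List.replicate (j + 1 - i) c := by
    have hrep := List.eq_replicate_of_mem (a := c) (l := (w.drop i).take (j + 1 - i)) ?_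
    · rw [hmidlen] at hrep; exact hrep
    intro x hx
    obtain ⟨t, ht, hval⟩ := List.mem_iff_getElem.mp hx
    rw [hmidlen] at ht
    rw [List.getElem_take, List.getElem_drop] at hval
    rw [← hval, ← List.getD_eq_getElem _ 0]
    exact hmidall (i + t) (by omega) (by omega)
  have hta : w.take i = a := by rw [hw1]; exact List.take_left
  have htb : w.drop (j + 1) = b'.reverse := by
    rw [hw2', show s'.reverse ++ c :: b'.reverse = (s'.reverse ++ [c]) ++ b'.reverse by simp]
    exact List.drop_left' (by simp [hj])
  have hcount : w.count c = j + 1 - i := by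
    nth_rewrite 1 [hdec]
    rw [hmid, hta, htb]
    rw [List.count_append, List.count_append]
    rw [List.count_eq_zero_of_not_mem ha, List.count_eq_zero_of_not_mem hb]
    simp
  refine ⟨a, b'.reverse, ?_, ha, hb⟩
  rw [hcount, ← hta, ← htb, ← hmid]
  exact hdec

instance : DecidablePred IsStirlingPerm := fun w =>
  decidable_of_iff (∀ j < w.length, ∀ s < j, ∀ i < s,
      w.getD i 0 = w.getD j 0 → w.getD i 0 ≤ w.getD s 0)
    ⟨fun h i s j his hsj hj heq => h j hj s hsj i his heq,
     fun h j hj s hs i hi heq => h i s j hi hs hj heq⟩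

noncomputable def SPerms (k : ℕ → ℕ) (n : ℕ) : Finset (List ℕ) :=
  ((multisetOf k n).toList.permutations.toFinset).filter IsStirlingPerm

lemma mem_SPerms {k : ℕ → ℕ} {n : ℕ} {w : List ℕ} :
    w ∈ SPerms k n ↔ (↑w : Multiset ℕ) = multisetOf k n ∧ IsStirlingPerm w := by
  rw [SPerms, mem_filter, List.mem_toFinset, List.mem_permutations]
  constructor
  · rintro ⟨h1, h2⟩
    refine ⟨?_, h2⟩
    rw [← Multiset.coe_toList (multisetOf k n), Multiset.coe_eq_coe]
    exact h1
  · rintro ⟨h1, h2⟩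
    refine ⟨?_, h2⟩
    rw [← Multiset.coe_eq_coe, Multiset.coe_toList]
    exact h1

lemma eulerianA_eq (k : ℕ → ℕ) (n i : ℕ) :
    eulerianA k n i = ((SPerms k n).filter fun w => descents w = i).card := by
  have hset : {w : List ℕ | (↑w : Multiset ℕ) = multisetOf k n ∧ IsStirlingPerm w ∧
      descents w = i} = ↑((SPerms k n).filter fun w => descents w = i) := by
    ext w
    simp only [Set.mem_setOf_eq, coe_filter, mem_SPerms]
    tauto
  have : eulerianA k n i = Set.ncard {w : List ℕ | (↑w : Multiset ℕ) = multisetOf k n ∧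
      IsStirlingPerm w ∧ descents w = i} := rfl
  rw [this, hset, Set.ncard_coe_finset]

lemma mem_multisetOf {k : ℕ → ℕ} {n x : ℕ} :
    x ∈ multisetOf k n ↔ ∃ i < n, k i ≠ 0 ∧ x = i + 1 := by
  rw [multisetOf, Multiset.mem_sum]
  constructor
  · rintro ⟨i, hi, hx⟩
    rw [Multiset.mem_replicate] at hx
    exact ⟨i, by simpa using hi, hx.1, hx.2⟩
  · rintro ⟨i, h1, h2, h3⟩
    exact ⟨i, by simpa using h1, Multiset.mem_replicate.mpr ⟨h2, h3⟩⟩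

lemma le_of_mem_multisetOf {k : ℕ → ℕ} {n x : ℕ} (h : x ∈ multisetOf k n) : x ≤ n := by
  obtain ⟨i, h1, _, h3⟩ := mem_multisetOf.mp h
  omega

lemma card_multisetOf (k : ℕ → ℕ) (n : ℕ) :
    Multiset.card (multisetOf k n) = bigK k n := by
  rw [multisetOf, bigK]
  rw [Multiset.card_sum]
  simp

lemma multisetOf_succ (k : ℕ → ℕ) (n : ℕ) :
    multisetOf k (n + 1) = multisetOf k n + Multiset.replicate (k n) (n + 1) := by
  rw [multisetOf, multisetOf, Finset.sum_range_succ]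

lemma count_multisetOf_self (k : ℕ → ℕ) (n : ℕ) :
    Multiset.count (n + 1) (multisetOf k (n + 1)) = k n := by
  rw [multisetOf_succ, Multiset.count_add, Multiset.count_replicate_self]
  have : (n + 1) ∉ multisetOf k n := fun h => by
    have := le_of_mem_multisetOf h; omega
  rw [Multiset.count_eq_zero_of_notMem this, zero_add]

lemma n_le_bigK {k : ℕ → ℕ} {n : ℕ} (hk : ∀ i < n, 1 ≤ k i) : n ≤ bigK k n := by
  rw [bigK]
  calc n = ∑ _i ∈ Finset.range n, 1 := by simp
  _ ≤ ∑ i ∈ Finset.range n, k i :=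
    Finset.sum_le_sum fun i hi => hk i (Finset.mem_range.mp hi)

lemma descents_mem_Icc {k : ℕ → ℕ} {n : ℕ} (hk : ∀ i < n, 1 ≤ k i) (hn : 1 ≤ n)
    {w : List ℕ} (hms : (↑w : Multiset ℕ) = multisetOf k n) (hsp : IsStirlingPerm w) :
    descents w ∈ Finset.Icc 1 n := by
  have hlen : w.length = bigK k n := by
    have := card_multisetOf k n
    rw [← hms] at this
    simpa using this
  have hlen1 : 1 ≤ w.length := by
    have := n_le_bigK hk
    omega
  have hmemw : ∀ t, t < w.length → w.getD t 0 ∈ multisetOf k n := by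
    intro t ht
    rw [← hms]
    exact_mod_cast mem_of_getD ht
  set len := w.length with hlendef
  set D := (Finset.range (len - 1)).filter fun i => w.getD (i + 1) 0 < w.getD i 0 with hD
  set x := w.getD (len - 1) 0 with hx
  -- descent indices don't carry the last value
  have hne : ∀ i ∈ D, w.getD i 0 ≠ x := by
    intro i hi hcon
    rw [hD, Finset.mem_filter, Finset.mem_range] at hi
    obtain ⟨hi1, hi2⟩ := hi
    rcases Nat.lt_or_ge (i + 1) (len - 1) with h | h
    · exact absurd (hsp i (i + 1) (len - 1) (by omega) h (by omega) hcon) (by omega)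
    · have : i + 1 = len - 1 := by omega
      rw [this] at hi2
      omega
  have hmaps : ∀ i ∈ D, w.getD i 0 ∈ ((multisetOf k n).toFinset).erase x := by
    intro i hi
    refine Finset.mem_erase.mpr ⟨hne i hi, ?_⟩
    rw [Multiset.mem_toFinset]
    apply hmemw
    rw [hD, Finset.mem_filter, Finset.mem_range] at hi
    omega
  have haux : ∀ i1 ∈ D, ∀ i2 ∈ D, i1 < i2 → w.getD i1 0 ≠ w.getD i2 0 := by
    intro i1 hi1 i2 hi2 hlt hcon
    rw [hD, Finset.mem_filter, Finset.mem_range] at hi1 hi2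
    rcases Nat.lt_or_ge (i1 + 1) i2 with h | h
    · exact absurd (hsp i1 (i1 + 1) i2 (by omega) h (by omega) hcon) (by omega)
    · have : i1 + 1 = i2 := by omega
      rw [← this] at hcon
      omega
  have hinj : Set.InjOn (fun i => w.getD i 0) D := by
    intro i1 hi1 i2 hi2 heq
    rcases lt_trichotomy i1 i2 with h | h | h
    · exact absurd heq (haux i1 hi1 i2 hi2 h)
    · exact h
    · exact absurd heq.symm (haux i2 hi2 i1 hi1 h)
  have hcard1 : D.card ≤ (((multisetOf k n).toFinset).erase x).card :=
    Finset.card_le_card_of_injOn _ hmaps hinj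
  have hxmem : x ∈ (multisetOf k n).toFinset := by
    rw [Multiset.mem_toFinset]
    exact hmemw _ (by omega)
  have hsub : (multisetOf k n).toFinset ⊆ (Finset.range n).image (· + 1) := by
    intro y hy
    rw [Multiset.mem_toFinset, mem_multisetOf] at hy
    obtain ⟨i, h1, _, h3⟩ := hy
    exact Finset.mem_image.mpr ⟨i, Finset.mem_range.mpr h1, h3.symm⟩
  have hcard2 : ((multisetOf k n).toFinset).card ≤ n := by
    calc ((multisetOf k n).toFinset).card ≤ ((Finset.range n).image (· + 1)).card :=
      Finset.card_le_card hsub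
    _ ≤ (Finset.range n).card := Finset.card_image_le
    _ = n := Finset.card_range n
  have hcard3 : (((multisetOf k n).toFinset).erase x).card =
      ((multisetOf k n).toFinset).card - 1 := Finset.card_erase_of_mem hxmem
  rw [descents, Finset.mem_Icc]
  show 1 ≤ D.card + 1 ∧ D.card + 1 ≤ n
  have hpos : 1 ≤ ((multisetOf k n).toFinset).card := Finset.card_pos.mpr ⟨x, hxmem⟩
  constructor
  · omega
  · have : D.card ≤ n - 1 := by omega
    omega

lemma takeWhile_eq_of {p : ℕ → Bool} {a rest : List ℕ} {c : ℕ}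
    (ha : ∀ x ∈ a, p x) (hc : p c = false) : (a ++ c :: rest).takeWhile p = a := by
  induction a with
  | nil => simp [List.takeWhile_cons, hc]
  | cons x t ih =>
    simp [List.takeWhile_cons, ha x List.mem_cons_self,
      ih fun y hy => ha y (List.mem_cons_of_mem x hy)]

lemma length_SPerms {k : ℕ → ℕ} {n : ℕ} {w : List ℕ} (h : w ∈ SPerms k n) :
    w.length = bigK k n := by
  have hms := (mem_SPerms.mp h).1
  have := card_multisetOf k n
  rw [← hms] at this
  simpa using this

lemma card_SPerms_succ (k : ℕ → ℕ) (n : ℕ) (hk1 : 1 ≤ k n) :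
    (SPerms k (n + 1)).card = (bigK k n + 1) * (SPerms k n).card := by
  classical
  set c := n + 1 with hc
  have key : (SPerms k (n + 1)).card = ((SPerms k n) ×ˢ (Finset.range (bigK k n + 1))).card := by
    apply Finset.card_bij' (i := fun w _ => (w.filter (fun x => x ≠ c),
        (w.takeWhile (fun x => x ≠ c)).length))
      (j := fun u _ => u.1.take u.2 ++ List.replicate (k n) c ++ u.1.drop u.2)
    -- first: forward maps into product, with left inverse; we prove all four goals
    · -- hi : maps into product
      intro w hw
      obtain ⟨hms, hsp⟩ := mem_SPerms.mp hw
      have hcnt : w.count c = k n := by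
        have h1 := count_multisetOf_self k n
        rw [← hms, Multiset.coe_count] at h1
        exact h1
      have hmem : c ∈ w := by
        rw [← List.count_pos_iff, hcnt]
        omega
      have hmax : ∀ x ∈ w, x ≤ c := fun x hx =>
        le_of_mem_multisetOf (k := k) (n := n + 1) (by rw [← hms]; exact_mod_cast hx)
      obtain ⟨a, b, hdec, ha, hb⟩ := block_decomp hsp hmem hmax
      rw [hcnt] at hdec
      have hfa : a.filter (fun x => x ≠ c) = a :=
        List.filter_eq_self.mpr fun x hx => by
        simp only [decide_eq_true_eq]
        rintro rfl
        exact ha hx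
      have hfb : b.filter (fun x => x ≠ c) = b :=
        List.filter_eq_self.mpr fun x hx => by
        simp only [decide_eq_true_eq]
        rintro rfl
        exact hb hx
      have hfilter : w.filter (fun x => x ≠ c) = a ++ b := by
        rw [hdec, List.filter_append, List.filter_append, hfa, hfb,
          List.filter_replicate_of_neg (by simp)]
        simp
      have hmsab : (↑(a ++ b) : Multiset ℕ) = multisetOf k n := by
        have h1 : (↑w : Multiset ℕ) = ↑(a ++ b) + Multiset.replicate (k n) c := by
          rw [hdec, ← Multiset.coe_replicate]
          simp only [← Multiset.coe_add]
          change (↑a + ↑(List.replicate (k n) c) + ↑b : Multiset ℕ) =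
            ↑a + ↑b + ↑(List.replicate (k n) c)
          exact add_right_comm _ _ _
        rw [hms, multisetOf_succ] at h1
        exact (add_right_cancel h1.symm)
      have hsp' : IsStirlingPerm (a ++ b) := isSP_remove (hdec ▸ hsp)
      have htw : (w.takeWhile (fun x => x ≠ c)).length = a.length := by
        rw [hdec, List.append_assoc, show List.replicate (k n) c ++ b = c :: (List.replicate (k n - 1) c ++ b) by
          rw [show k n = (k n - 1) + 1 by omega, List.replicate_succ]; simp]
        rw [takeWhile_eq_of (fun x hx => by
          simp only [decide_eq_true_eq]
          rintro rfl
          exact ha hx) (by simp)]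
      rw [hfilter, htw, Finset.mem_product]
      constructor
      · exact mem_SPerms.mpr ⟨hmsab, hsp'⟩
      · rw [Finset.mem_range]
        have : (a ++ b).length = bigK k n := by
          have := card_multisetOf k n
          rw [← hmsab] at this
          simpa using this
        simp at this ⊢
        omega
    · -- hj : backward maps into SPerms (n+1)
      intro u hu
      rw [Finset.mem_product] at hu
      obtain ⟨hu1, hu2⟩ := hu
      obtain ⟨hms, hsp⟩ := mem_SPerms.mp hu1
      have hlt : ∀ x ∈ u.1.take u.2 ++ u.1.drop u.2, x < c := by
        intro x hx
        rw [List.take_append_drop] at hx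
        have : x ≤ n := le_of_mem_multisetOf (k := k) (by rw [← hms]; exact_mod_cast hx)
        omega
      refine mem_SPerms.mpr ⟨?_, ?_⟩
      · have : (↑(u.1.take u.2 ++ List.replicate (k n) c ++ u.1.drop u.2) : Multiset ℕ) =
            (↑(u.1.take u.2 ++ u.1.drop u.2) : Multiset ℕ) + Multiset.replicate (k n) c := by
          rw [← Multiset.coe_replicate]
          simp only [← Multiset.coe_add]
          change (↑(u.1.take u.2) + ↑(List.replicate (k n) c) + ↑(u.1.drop u.2) : Multiset ℕ) =
            ↑(u.1.take u.2) + ↑(u.1.drop u.2) + ↑(List.replicate (k n) c)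
          exact add_right_comm _ _ _
        rw [this, List.take_append_drop, hms, multisetOf_succ]
      · exact isSP_insert (by rw [List.take_append_drop]; exact hsp) hlt
    · -- left inverse : g (f w) = w
      intro w hw
      obtain ⟨hms, hsp⟩ := mem_SPerms.mp hw
      have hcnt : w.count c = k n := by
        have h1 := count_multisetOf_self k n
        rw [← hms, Multiset.coe_count] at h1
        exact h1
      have hmem : c ∈ w := by
        rw [← List.count_pos_iff, hcnt]
        omega
      have hmax : ∀ x ∈ w, x ≤ c := fun x hx =>
        le_of_mem_multisetOf (k := k) (n := n + 1) (by rw [← hms]; exact_mod_cast hx)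
      obtain ⟨a, b, hdec, ha, hb⟩ := block_decomp hsp hmem hmax
      rw [hcnt] at hdec
      have hfa : a.filter (fun x => x ≠ c) = a :=
        List.filter_eq_self.mpr fun x hx => by
        simp only [decide_eq_true_eq]
        rintro rfl
        exact ha hx
      have hfb : b.filter (fun x => x ≠ c) = b :=
        List.filter_eq_self.mpr fun x hx => by
        simp only [decide_eq_true_eq]
        rintro rfl
        exact hb hx
      have hfilter : w.filter (fun x => x ≠ c) = a ++ b := by
        rw [hdec, List.filter_append, List.filter_append, hfa, hfb,
          List.filter_replicate_of_neg (by simp)]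
        simp
      have htw : (w.takeWhile (fun x => x ≠ c)).length = a.length := by
        rw [hdec, List.append_assoc, show List.replicate (k n) c ++ b = c :: (List.replicate (k n - 1) c ++ b) by
          rw [show k n = (k n - 1) + 1 by omega, List.replicate_succ]; simp]
        rw [takeWhile_eq_of (fun x hx => by
          simp only [decide_eq_true_eq]
          rintro rfl
          exact ha hx) (by simp)]
      simp only [hfilter, htw]
      rw [List.take_left, List.drop_left, ← hdec]
    · -- right inverse : f (g u) = u
      intro u hu
      rw [Finset.mem_product] at hu
      obtain ⟨hu1, hu2⟩ := hu
      obtain ⟨hms, hsp⟩ := mem_SPerms.mp hu1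
      have hulen : u.1.length = bigK k n := length_SPerms hu1
      have hple : u.2 ≤ u.1.length := by
        rw [hulen]
        rw [Finset.mem_range] at hu2
        omega
      have hxlt : ∀ x ∈ u.1, x ≠ c := by
        intro x hx
        have : x ≤ n := le_of_mem_multisetOf (k := k) (by rw [← hms]; exact_mod_cast hx)
        omega
      have hfa : (u.1.take u.2).filter (fun x => x ≠ c) = u.1.take u.2 :=
        List.filter_eq_self.mpr fun x hx => by
          simpa using hxlt x (List.mem_of_mem_take hx)
      have hfb : (u.1.drop u.2).filter (fun x => x ≠ c) = u.1.drop u.2 :=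
        List.filter_eq_self.mpr fun x hx => by
          simpa using hxlt x (List.mem_of_mem_drop hx)
      have h1 : (u.1.take u.2 ++ List.replicate (k n) c ++ u.1.drop u.2).filter
          (fun x => x ≠ c) = u.1 := by
        rw [List.filter_append, List.filter_append, hfa, hfb,
          List.filter_replicate_of_neg (by simp)]
        simp [List.take_append_drop]
      have h2 : ((u.1.take u.2 ++ List.replicate (k n) c ++ u.1.drop u.2).takeWhile
          (fun x => x ≠ c)).length = u.2 := by
        rw [List.append_assoc, show List.replicate (k n) c ++ u.1.drop u.2 =
            c :: (List.replicate (k n - 1) c ++ u.1.drop u.2) by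
          rw [show k n = (k n - 1) + 1 by omega, List.replicate_succ]; simp]
        rw [takeWhile_eq_of (fun x hx => by
          simpa using hxlt x (List.mem_of_mem_take hx)) (by simp)]
        rw [List.length_take]
        omega
      rw [h1, h2]
  rw [key, Finset.card_product, Finset.card_range]
  ring

lemma isSP_replicate {m a : ℕ} : IsStirlingPerm (List.replicate m a) := by
  intro i s j his hsj hj heq
  rw [List.length_replicate] at hj
  rw [gdrep (by omega), gdrep (by omega)]

lemma card_SPerms_one (k : ℕ → ℕ) : (SPerms k 1).card = 1 := by
  have hms : multisetOf k 1 = Multiset.replicate (k 0) 1 := by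
    rw [multisetOf, Finset.sum_range_one]
  have : SPerms k 1 = {List.replicate (k 0) 1} := by
    ext w
    rw [mem_SPerms, Finset.mem_singleton, hms, ← Multiset.coe_replicate,
      Multiset.coe_eq_coe, List.perm_replicate]
    constructor
    · rintro ⟨h, _⟩; exact h
    · rintro rfl; exact ⟨rfl, isSP_replicate⟩
  rw [this, Finset.card_singleton]

lemma card_SPerms_eq (k : ℕ → ℕ) : ∀ n, 1 ≤ n → (∀ i < n, 1 ≤ k i) →
    (SPerms k n).card = ∏ i ∈ Finset.range (n - 1), ((∑ j ∈ Finset.range (i + 1), k j) + 1) := by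
  intro n
  induction n with
  | zero => omega
  | succ m ih =>
    intro _ hk
    rcases Nat.eq_zero_or_pos m with hm | hm
    · subst hm
      simpa using card_SPerms_one k
    · rw [card_SPerms_succ k m (hk m (by omega)), ih hm (fun i hi => hk i (by omega))]
      rw [Nat.add_sub_cancel]
      rw [show m = (m - 1) + 1 by omega, Finset.prod_range_succ, ← show m = (m - 1) + 1 by omega]
      rw [bigK, mul_comm]
  
lemma sum_eulerianA (k : ℕ → ℕ) (n : ℕ) (hk : ∀ i < n, 1 ≤ k i) (hn : 1 ≤ n) :
    ∑ i ∈ Finset.Icc 1 n, eulerianA k n i = (SPerms k n).card := by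
  have := Finset.card_eq_sum_card_fiberwise (f := descents) (s := SPerms k n)
    (t := Finset.Icc 1 n) (fun w hw =>
      descents_mem_Icc hk hn (mem_SPerms.mp hw).1 (mem_SPerms.mp hw).2)
  rw [this]
  exact Finset.sum_congr rfl fun i _ => eulerianA_eq k n i


lemma sum_eulerianA_prod (k : ℕ → ℕ) (n : ℕ) (hk : ∀ i < n, 1 ≤ k i) (hn : 1 ≤ n) :
    ∑ i ∈ Finset.Icc 1 n, eulerianA k n i =
      ∏ i ∈ Finset.range (n - 1), ((∑ j ∈ Finset.range (i + 1), k j) + 1) := by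
  rw [sum_eulerianA k n hk hn, card_SPerms_eq k n hn hk]

end SPaux

open SPaux Polynomial

/-- B_k(m) is a polynomial in m of degree K with leading coefficient |SP_k|/K!
(where |SP_k| = ∏_{i=1}^{n-1}(k_1+...+k_i+1)), and
B_k(0) = B_k(-1) = ... = B_k(-K+n) = 0. -/
theorem Bpoly_degree_leading_roots (k : ℕ → ℕ) (n : ℕ) (hk : ∀ i < n, 1 ≤ k i)
    (hn : 1 ≤ n) :
    (∃ p : Polynomial ℚ,
      (∀ m : ℤ, BpolyQ k n m = p.eval (m : ℚ)) ∧
      p.degree = bigK k n ∧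
      p.leadingCoeff =
        (∏ i ∈ Finset.range (n - 1), ((∑ j ∈ Finset.range (i + 1), k j) + 1) : ℚ) /
          (Nat.factorial (bigK k n))) ∧
    (∀ j : ℕ, j ≤ bigK k n - n → BpolyQ k n (-(j : ℤ)) = 0) := by
  set K := bigK k n with hK
  have hKn : n ≤ K := n_le_bigK hk
  constructor
  · -- polynomial part
    set q : ℕ → Polynomial ℚ := fun i => ∏ j ∈ Finset.range K, (X + C (1 - (i : ℚ) + (j : ℚ)))
      with hq
    set p : Polynomial ℚ := C ((K.factorial : ℚ))⁻¹ *
      ∑ i ∈ Finset.Icc 1 n, C ((eulerianA k n i : ℚ)) * q i with hp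
    have hfac : ((K.factorial : ℚ)) ≠ 0 := by
      exact_mod_cast K.factorial_ne_zero
    have hqmonic : ∀ i, (q i).Monic := fun i =>
      monic_prod_of_monic _ _ fun j _ => monic_X_add_C _
    have hqdeg : ∀ i, (q i).natDegree = K := by
      intro i
      rw [hq]
      rw [natDegree_prod_of_monic _ _ fun j _ => monic_X_add_C _]
      have hone : ∀ t ∈ Finset.range K, (X + C (1 - (i : ℚ) + (t : ℚ))).natDegree = 1 :=
        fun t _ => natDegree_X_add_C _
      rw [Finset.sum_congr rfl hone]
      simp
    have hqdeg' : ∀ i, (q i).degree = (K : WithBot ℕ) := by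
      intro i
      rw [degree_eq_natDegree (hqmonic i).ne_zero, hqdeg i]
    -- the sum of eulerian numbers
    have hsum : ∑ i ∈ Finset.Icc 1 n, ((eulerianA k n i : ℚ)) =
        ((∏ i ∈ Finset.range (n - 1), ((∑ j ∈ Finset.range (i + 1), k j) + 1) : ℕ) : ℚ) := by
      rw [← Nat.cast_sum]
      exact_mod_cast sum_eulerianA_prod k n hk hn
    have hprodpos : 0 < ∏ i ∈ Finset.range (n - 1), ((∑ j ∈ Finset.range (i + 1), k j) + 1) :=
      Finset.prod_pos fun i _ => by omega
    have hcoeffK : p.coeff K = (K.factorial : ℚ)⁻¹ *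
        ((∏ i ∈ Finset.range (n - 1), ((∑ j ∈ Finset.range (i + 1), k j) + 1) : ℕ) : ℚ) := by
      rw [hp, coeff_C_mul, finset_sum_coeff]
      congr 1
      rw [← hsum]
      refine Finset.sum_congr rfl fun i _ => ?_
      rw [coeff_C_mul]
      have : (q i).coeff K = 1 := by
        have := (hqmonic i).coeff_natDegree
        rwa [hqdeg i] at this
      rw [this, mul_one]
    have hcoeffK_ne : p.coeff K ≠ 0 := by
      rw [hcoeffK]
      apply mul_ne_zero (inv_ne_zero hfac)
      exact_mod_cast hprodpos.ne'
    have hdegle : p.degree ≤ (K : WithBot ℕ) := by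
      rw [hp]
      refine le_trans (degree_mul_le _ _) ?_
      have h2 : (∑ i ∈ Finset.Icc 1 n, C ((eulerianA k n i : ℚ)) * q i).degree ≤
          (K : WithBot ℕ) := by
        refine le_trans (degree_sum_le _ _) ?_
        refine Finset.sup_le fun i _ => ?_
        refine le_trans (degree_mul_le _ _) ?_
        rw [hqdeg' i]
        calc (C ((eulerianA k n i : ℚ))).degree + (K : WithBot ℕ) ≤ 0 + (K : WithBot ℕ) := by
              gcongr
              exact degree_C_le
        _ = (K : WithBot ℕ) := zero_add _
      calc (C ((K.factorial : ℚ))⁻¹).degree +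
            (∑ i ∈ Finset.Icc 1 n, C ((eulerianA k n i : ℚ)) * q i).degree
          ≤ 0 + (K : WithBot ℕ) := add_le_add degree_C_le h2
        _ = (K : WithBot ℕ) := zero_add _
    have hdeg : p.degree = (K : WithBot ℕ) :=
      degree_eq_of_le_of_coeff_ne_zero hdegle hcoeffK_ne
    refine ⟨p, ?_, hdeg, ?_⟩
    · -- evaluation
      intro m
      rw [BpolyQ, hp]
      rw [eval_mul, eval_C, eval_finset_sum, Finset.mul_sum]
      refine Finset.sum_congr rfl fun i _ => ?_
      rw [eval_mul, eval_C, hq]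
      rw [eval_prod]
      have : ∏ j ∈ Finset.range K, ((X + C (1 - (i : ℚ) + (j : ℚ))).eval (m : ℚ)) =
          ∏ j ∈ Finset.range K, ((m : ℚ) - i + 1 + j) := by
        refine Finset.prod_congr rfl fun j _ => ?_
        rw [eval_add, eval_X, eval_C]
        ring
      rw [this, div_eq_mul_inv]
      ring
    · -- leading coefficient
      rw [leadingCoeff, natDegree_eq_of_degree_eq_some hdeg, hcoeffK]
      rw [div_eq_inv_mul]
      congr 1
      push_cast
      ring
  · -- roots
    intro j hj
    rw [BpolyQ]
    push_cast
    refine Finset.sum_eq_zero fun i hi => ?_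
    rw [Finset.mem_Icc] at hi
    have hzero : ∏ t ∈ Finset.range K, (-(j : ℚ) - i + 1 + t) = 0 := by
      refine Finset.prod_eq_zero (i := i + j - 1) (Finset.mem_range.mpr (by omega)) ?_
      have hc : ((i + j - 1 : ℕ) : ℚ) = (i : ℚ) + j - 1 := by
        have h1 : 1 ≤ i + j := by omega
        push_cast [Nat.cast_sub h1]
        ring
      rw [hc]
      ring
    rw [← hK, hzero]
    simp
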